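/- Let q be an odd prime power and F_q the field with q elements. Let U ⊆ SL₂(F_q) be the subgroup of upper unitriangular matrices [[1,x],[0,1]] (x ∈ F_q) and let s = [[0,−1],[1,0]] ∈ SL₂(F_q). Set g = [[1,0],[1,1]]. Then: (a) g lies in the double coset U s U (indeed g = u s u with u = [[1,1],[0,1]]); and (b) for any nonsquare ξ ∈ F_q^×, no SL₂(F_q)-conjugate of g' = [[1,0],[ξ,1]] lies in U s U. Consequently, the conjugacy class of g is the unique SL₂(F_q)-conjugacy class of nonidentity unipotent elements having nonempty intersection with U s U. -/

import Mathlib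

open Matrix Matrix.SpecialLinearGroup


/-- `g = [[1,0],[1,1]] ∈ SL₂(F)`. -/
def regUnip (F : Type*) [Field F] : Matrix.SpecialLinearGroup (Fin 2) F :=
  ⟨!![1, 0; 1, 1], by simp [Matrix.det_fin_two_of]⟩

/-- `g' = [[1,0],[ξ,1]] ∈ SL₂(F)`. -/
def regUnip' {F : Type*} [Field F] (ξ : F) : Matrix.SpecialLinearGroup (Fin 2) F :=
  ⟨!![1, 0; ξ, 1], by simp [Matrix.det_fin_two_of]⟩

/-- `s = [[0,-1],[1,0]] ∈ SL₂(F)`. -/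
def coxEl (F : Type*) [Field F] : Matrix.SpecialLinearGroup (Fin 2) F :=
  ⟨!![0, -1; 1, 0], by simp [Matrix.det_fin_two_of]⟩

/-- `u = [[1,1],[0,1]] ∈ SL₂(F)`. -/
def uEl (F : Type*) [Field F] : Matrix.SpecialLinearGroup (Fin 2) F :=
  ⟨!![1, 1; 0, 1], by simp [Matrix.det_fin_two_of]⟩

/-- The subgroup (as a set) of upper unitriangular matrices in `SL₂(F)`. -/
def upperUnitriSet (F : Type*) [Field F] : Set (Matrix.SpecialLinearGroup (Fin 2) F) :=
  {M | ∃ x : F, (M : Matrix (Fin 2) (Fin 2) F) = !![1, x; 0, 1]}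

/-- The double coset `U s U` in `SL₂(F)`. -/
def UsU (F : Type*) [Field F] : Set (Matrix.SpecialLinearGroup (Fin 2) F) :=
  {m | ∃ u₁ ∈ upperUnitriSet F, ∃ u₂ ∈ upperUnitriSet F, m = u₁ * coxEl F * u₂}

section Aux

variable {F : Type*} [Field F]

/-- A general unitriangular element of `SL₂(F)`. -/
def utEl (x : F) : Matrix.SpecialLinearGroup (Fin 2) F :=
  ⟨!![1, x; 0, 1], by simp [Matrix.det_fin_two_of]⟩

lemma utEl_mem (x : F) : utEl x ∈ upperUnitriSet F := ⟨x, rfl⟩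

lemma mem_UsU_iff (m : Matrix.SpecialLinearGroup (Fin 2) F) :
    m ∈ UsU F ↔ (m : Matrix (Fin 2) (Fin 2) F) 1 0 = 1 := by
  constructor
  · rintro ⟨u₁, ⟨x, hx⟩, u₂, ⟨y, hy⟩, rfl⟩
    rw [coe_mul, coe_mul]
    simp [coe_mul, hx, hy, coxEl, Matrix.mul_apply, Fin.sum_univ_two]
  · intro h
    refine ⟨utEl ((m : Matrix (Fin 2) (Fin 2) F) 0 0), utEl_mem _,
      utEl ((m : Matrix (Fin 2) (Fin 2) F) 1 1), utEl_mem _, ?_⟩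
    have hdet : (m : Matrix (Fin 2) (Fin 2) F).det = 1 := m.2
    rw [Matrix.det_fin_two, h, mul_one] at hdet
    apply Subtype.ext
    rw [coe_mul, coe_mul]
    show (m : Matrix (Fin 2) (Fin 2) F) = !![1, _; 0, 1] * !![0, -1; 1, 0] * !![1, _; 0, 1]
    rw [Matrix.eta_fin_two (m : Matrix (Fin 2) (Fin 2) F), h]
    ext i j
    fin_cases i <;> fin_cases j <;>
      simp [Matrix.mul_apply, Fin.sum_univ_two] <;> linear_combination -hdet

lemma utEl_conj (t : F) :
    utEl t * regUnip F * (utEl t)⁻¹ = ⟨!![1 + t, -t ^ 2; 1, 1 - t], by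
      simp [Matrix.det_fin_two_of]; ring⟩ := by
  apply Subtype.ext
  rw [coe_mul, coe_mul, coe_inv, Matrix.adjugate_fin_two]
  show !![1, t; 0, 1] * !![1, 0; 1, 1] * _ = _
  ext i j
  fin_cases i <;> fin_cases j <;>
    simp [utEl, Matrix.mul_apply, Fin.sum_univ_two] <;> ring

end Aux

/-- For `q` an odd prime power, `F` the field with `q` elements:
(a) `g = [[1,0],[1,1]]` lies in `U s U`, indeed `g = u s u` with
`u = [[1,1],[0,1]]`; (b) for any nonsquare `ξ ∈ F^×`, no `SL₂(F)`-conjugate of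
`g' = [[1,0],[ξ,1]]` lies in `U s U`; consequently, the conjugacy class of `g`
is the unique `SL₂(F)`-conjugacy class of nonidentity unipotent elements
meeting `U s U`. -/
theorem regUnip_class_unique_meeting_UsU (q : ℕ) (hq : Odd q)
    (F : Type*) [Field F] [Fintype F] (hcard : Fintype.card F = q)
    (ξ : F) (hξ0 : ξ ≠ 0) (hξ : ¬ IsSquare ξ) :
    (uEl F ∈ upperUnitriSet F ∧ regUnip F = uEl F * coxEl F * uEl F ∧
      regUnip F ∈ UsU F) ∧
    (∀ h : Matrix.SpecialLinearGroup (Fin 2) F, h * regUnip' ξ * h⁻¹ ∉ UsU F) ∧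
    (∀ M : Matrix.SpecialLinearGroup (Fin 2) F,
      ((M : Matrix (Fin 2) (Fin 2) F) - 1) ^ 2 = 0 → M ≠ 1 →
        ((∃ x ∈ UsU F, IsConj M x) ↔ IsConj (regUnip F) M)) := by
  have hgU : regUnip F ∈ UsU F := (mem_UsU_iff _).2 (by simp [regUnip])
  refine ⟨⟨⟨1, rfl⟩, ?_, hgU⟩, ?_, ?_⟩
  · -- g = u s u
    apply Subtype.ext
    rw [coe_mul, coe_mul]
    show (!![1, 0; 1, 1] : Matrix (Fin 2) (Fin 2) F) = !![1,1;0,1] * !![0,-1;1,0] * !![1,1;0,1]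
    ext i j
    fin_cases i <;> fin_cases j <;> simp [Matrix.mul_apply, Fin.sum_univ_two]
  · -- (b)
    intro h hmem
    rw [mem_UsU_iff] at hmem
    rw [coe_mul, coe_mul, coe_inv, Matrix.adjugate_fin_two] at hmem
    set a := (h : Matrix (Fin 2) (Fin 2) F) 0 0
    set b := (h : Matrix (Fin 2) (Fin 2) F) 0 1
    set c := (h : Matrix (Fin 2) (Fin 2) F) 1 0
    set d := (h : Matrix (Fin 2) (Fin 2) F) 1 1
    have key : ξ * d ^ 2 = 1 := by
      have := hmem
      rw [Matrix.eta_fin_two (h : Matrix (Fin 2) (Fin 2) F)] at this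
      simp [regUnip', Matrix.mul_apply, Fin.sum_univ_two] at this
      linear_combination this
    have hd : d ≠ 0 := by
      intro h0; rw [h0] at key; simp at key
    exact hξ ⟨d⁻¹, by field_simp; linear_combination key⟩
  · -- (c)
    intro M hM hM1
    constructor
    · rintro ⟨x, hx, hconj⟩
      -- x is unipotent, nonidentity, and in UsU
      obtain ⟨c, hc⟩ := isConj_iff.1 hconj
      have hxcoe : (x : Matrix (Fin 2) (Fin 2) F)
          = (c : Matrix (Fin 2) (Fin 2) F) * M * (c⁻¹ : Matrix.SpecialLinearGroup (Fin 2) F) := by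
        rw [← coe_mul, ← coe_mul, hc]
      have hcc : (c : Matrix (Fin 2) (Fin 2) F) * (c⁻¹ : Matrix.SpecialLinearGroup (Fin 2) F) = 1 := by
        rw [← coe_mul, mul_inv_cancel, coe_one]
      have hcc' : ((c⁻¹ : Matrix.SpecialLinearGroup (Fin 2) F) : Matrix (Fin 2) (Fin 2) F) * c = 1 := by
        rw [← coe_mul, inv_mul_cancel, coe_one]
      have hxunip : ((x : Matrix (Fin 2) (Fin 2) F) - 1) ^ 2 = 0 := by
        have h1 : (x : Matrix (Fin 2) (Fin 2) F) - 1
            = (c : Matrix (Fin 2) (Fin 2) F) * ((M : Matrix (Fin 2) (Fin 2) F) - 1)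
              * (c⁻¹ : Matrix.SpecialLinearGroup (Fin 2) F) := by
          rw [hxcoe, mul_sub, mul_one, sub_mul, hcc]
        have sq : ((x : Matrix (Fin 2) (Fin 2) F) - 1) ^ 2
            = (c : Matrix (Fin 2) (Fin 2) F) * (((M : Matrix (Fin 2) (Fin 2) F) - 1)
              * (((c⁻¹ : Matrix.SpecialLinearGroup (Fin 2) F) : Matrix (Fin 2) (Fin 2) F)
                * (c : Matrix (Fin 2) (Fin 2) F)) * ((M : Matrix (Fin 2) (Fin 2) F) - 1))
              * (c⁻¹ : Matrix.SpecialLinearGroup (Fin 2) F) := by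
          rw [h1]; noncomm_ring
        rw [sq, hcc', mul_one, ← pow_two, hM]
        simp
      -- entries of x
      have h10 : (x : Matrix (Fin 2) (Fin 2) F) 1 0 = 1 := (mem_UsU_iff _).1 hx
      have htr : (x : Matrix (Fin 2) (Fin 2) F) 0 0 + (x : Matrix (Fin 2) (Fin 2) F) 1 1 = 2 := by
        have := congrFun (congrFun hxunip 1) 0
        rw [pow_two, Matrix.eta_fin_two (x : Matrix (Fin 2) (Fin 2) F), h10] at this
        simp [Matrix.mul_apply, Fin.sum_univ_two] at this
        linear_combination this
      have hdet : (x : Matrix (Fin 2) (Fin 2) F).det = 1 := x.2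
      rw [Matrix.det_fin_two, h10, mul_one] at hdet
      have hxeq : x = utEl ((x : Matrix (Fin 2) (Fin 2) F) 0 0 - 1) * regUnip F
          * (utEl ((x : Matrix (Fin 2) (Fin 2) F) 0 0 - 1))⁻¹ := by
        rw [utEl_conj]
        apply Subtype.ext
        show (x : Matrix (Fin 2) (Fin 2) F) = _
        ext i j
        fin_cases i <;> fin_cases j <;> simp
        · linear_combination -hdet + (x : Matrix (Fin 2) (Fin 2) F) 0 0 * htr
        · exact h10
        · linear_combination htr
      have : IsConj (regUnip F) x :=
        isConj_iff.2 ⟨utEl ((x : Matrix (Fin 2) (Fin 2) F) 0 0 - 1), hxeq.symm⟩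
      exact this.trans hconj.symm
    · intro hc
      exact ⟨regUnip F, hgU, hc.symm⟩
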